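/- Let K be a field, L an algebraic separable field extension of K, and f ∈ K[X] an irreducible separable polynomial of degree m. Then there exists an intermediate field M with K ⊆ M ⊆ L, finite over K with [M : K] ≤ m!, such that every monic irreducible factor of the image of f in L[X] has all of its coefficients in M (i.e., lies in the image of M[X] in L[X]). -/

import Mathlib

open Polynomial IntermediateField

theorem aux_finrank_splittingField_le_factorial
    (K : Type*) [Field K] (f : K[X]) (hsep : f.Separable) :
    Module.finrank K f.SplittingField ≤ Nat.factorial f.natDegree := by
  classical
  have : IsGalois K f.SplittingField := IsGalois.of_separable_splitting_field hsep
  haveI : Fact ((f.map (algebraMap K f.SplittingField)).Splits) := ⟨SplittingField.splits f⟩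
  have h1 : Fintype.card f.Gal = Module.finrank K f.SplittingField :=
    by rw [← Nat.card_eq_fintype_card]; exact IsGalois.card_aut_eq_finrank _ _
  have h2 := Fintype.card_le_of_injective _ (Polynomial.Gal.galActionHom_injective f f.SplittingField)
  rw [Fintype.card_perm,
    card_rootSet_eq_natDegree hsep (SplittingField.splits f)] at h2
  omega

theorem aux_coeff_prod_mem {K A : Type*} [Field K] [Field A] [Algebra K A]
    (N : IntermediateField K A) (R : Multiset A) (hR : ∀ a ∈ R, a ∈ N) (i : ℕ) :
    ((R.map fun a => X - C a).prod).coeff i ∈ N := by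
  induction R using Multiset.induction generalizing i with
  | empty =>
    simp only [Multiset.map_zero, Multiset.prod_zero, coeff_one]
    split_ifs
    exacts [one_mem _, zero_mem _]
  | cons a s ih =>
    have ha : a ∈ N := hR a (Multiset.mem_cons_self a s)
    have hs : ∀ b ∈ s, b ∈ N := fun b hb => hR b (Multiset.mem_cons_of_mem hb)
    rw [Multiset.map_cons, Multiset.prod_cons, coeff_mul]
    refine sum_mem fun p hp => mul_mem ?_ (ih hs p.2)
    rw [coeff_sub]
    refine sub_mem ?_ ?_
    · rw [coeff_X]
      split_ifs
      exacts [one_mem _, zero_mem _]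
    · rw [coeff_C]
      split_ifs
      exacts [ha, zero_mem _]

/-- Let `L/K` be an algebraic separable extension of fields and `f ∈ K[X]` an irreducible
separable polynomial of degree `m`. Then there is an intermediate field `M` with
`[M : K] ≤ m!` such that every monic irreducible factor of the image of `f` in `L[X]`
has all of its coefficients in `M`. -/
theorem exists_intermediateField_factors_coeff_mem
    (K L : Type) [Field K] [Field L] [Algebra K L]
    [Algebra.IsAlgebraic K L] [Algebra.IsSeparable K L]
    (f : Polynomial K) (hf : Irreducible f) (hfsep : f.Separable)
    (m : ℕ) (hm : f.natDegree = m) :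
    ∃ M : IntermediateField K L, FiniteDimensional K M ∧
      Module.finrank K M ≤ Nat.factorial m ∧
      ∀ g : Polynomial L, g.Monic → Irreducible g →
        g ∣ f.map (algebraMap K L) → ∀ i : ℕ, g.coeff i ∈ M := by
  classical
  set A := AlgebraicClosure L
  have hf0 : f ≠ 0 := hf.ne_zero
  have hsplit : (f.map (algebraMap K A)).Splits := IsAlgClosed.splits _
  set N : IntermediateField K A := IntermediateField.adjoin K (f.rootSet A) with hN
  haveI hNsf : f.IsSplittingField K N :=
    IntermediateField.adjoin_rootSet_isSplittingField hsplit
  haveI : FiniteDimensional K N := Polynomial.IsSplittingField.finiteDimensional N f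
  have hNrank : Module.finrank K N ≤ Nat.factorial m := by
    have := (Polynomial.IsSplittingField.algEquiv N f).toLinearEquiv.finrank_eq
    rw [this, ← hm]
    exact aux_finrank_splittingField_le_factorial K f hfsep
  set M : IntermediateField K L := N.comap (IsScalarTower.toAlgHom K L A) with hM
  have hMmem : ∀ x : L, x ∈ M ↔ algebraMap L A x ∈ N := fun x => Iff.rfl
  -- embed M into N
  let e : M →ₗ[K] N :=
    { toFun := fun x => ⟨algebraMap L A x.1, (hMmem x.1).mp x.2⟩
      map_add' := by intro x y; ext; simp
      map_smul' := by
        intro c x; ext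
        simp [Algebra.smul_def, ← IsScalarTower.algebraMap_apply] }
  have he : Function.Injective e := by
    intro x y hxy
    have := congrArg Subtype.val hxy
    exact Subtype.ext ((algebraMap L A).injective this)
  haveI hMfin : FiniteDimensional K M := FiniteDimensional.of_injective e he
  refine ⟨M, hMfin, le_trans (LinearMap.finrank_le_finrank_of_injective he) hNrank, ?_⟩
  intro g hgmonic hgirr hgdvd i
  rw [hMmem]
  set φ := algebraMap L A
  have hdvd : g.map φ ∣ f.map (algebraMap K A) := by
    rw [IsScalarTower.algebraMap_eq K L A, ← Polynomial.map_map]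
    exact Polynomial.map_dvd φ hgdvd
  have hsplitsg : (g.map φ).Splits := IsAlgClosed.splits _
  have heq : g.map φ = (((g.map φ).roots).map fun a => X - C a).prod :=
    hsplitsg.eq_prod_roots_of_monic (hgmonic.map φ)
  have hroots : ∀ a ∈ (g.map φ).roots, a ∈ N := by
    intro a ha
    apply IntermediateField.subset_adjoin
    rw [Polynomial.mem_rootSet]
    refine ⟨hf0, ?_⟩
    have : (g.map φ).eval a = 0 := (Polynomial.isRoot_of_mem_roots ha)
    have hfa : (f.map (algebraMap K A)).eval a = 0 := by
      obtain ⟨q, hq⟩ := hdvd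
      rw [hq, Polynomial.eval_mul, this, zero_mul]
    rwa [Polynomial.eval_map, ← Polynomial.aeval_def] at hfa
  have : (g.map φ).coeff i ∈ N := by
    rw [heq]
    exact aux_coeff_prod_mem N _ hroots i
  rwa [Polynomial.coeff_map] at this
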